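/- Let A, B ⊂ ℝ be closed intervals with B ⊂ (0, ∞), A symmetric about 0 (A = -A) with 0 ∈ A, and A, B linked. Let f : ℝ → ℝ be an even function that is a strict homeomorphism on (A ∩ [0,∞)) ∪ B. Then f(A) and f(B) are linked intervals. -/

import Mathlib

/-- Two intervals `A` and `B` are linked if they intersect but
neither contains the other. -/
def Linked (A B : Set ℝ) : Prop :=
  (A ∩ B).Nonempty ∧ ¬ A ⊆ B ∧ ¬ B ⊆ A

lemma img_mono (f : ℝ → ℝ) (x y : ℝ) (hxy : x ≤ y)
    (hc : ContinuousOn f (Set.Icc x y)) (hm : MonotoneOn f (Set.Icc x y)) :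
    f '' Set.Icc x y = Set.Icc (f x) (f y) := by
  apply Set.Subset.antisymm
  · rintro _ ⟨t, ht, rfl⟩
    exact ⟨hm (Set.left_mem_Icc.2 hxy) ht ht.1, hm ht (Set.right_mem_Icc.2 hxy) ht.2⟩
  · exact intermediate_value_Icc hxy hc

lemma img_anti (f : ℝ → ℝ) (x y : ℝ) (hxy : x ≤ y)
    (hc : ContinuousOn f (Set.Icc x y)) (hm : AntitoneOn f (Set.Icc x y)) :
    f '' Set.Icc x y = Set.Icc (f y) (f x) := by
  apply Set.Subset.antisymm
  · rintro _ ⟨t, ht, rfl⟩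
    exact ⟨hm ht (Set.right_mem_Icc.2 hxy) ht.2, hm (Set.left_mem_Icc.2 hxy) ht ht.1⟩
  · exact intermediate_value_Icc' hxy hc

theorem stmt8 (f : ℝ → ℝ) (a b₁ b₂ : ℝ) (A B : Set ℝ)
    (hA : A = Set.Icc (-a) a) (ha : 0 ≤ a)
    (hB : B = Set.Icc b₁ b₂) (hb : 0 < b₁ ∧ b₁ ≤ b₂)
    (hlinked : Linked A B)
    (heven : ∀ x, f (-x) = f x)
    (hcont : ContinuousOn f ((A ∩ Set.Ici 0) ∪ B))
    (hinj : Set.InjOn f ((A ∩ Set.Ici 0) ∪ B)) :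
    Linked (f '' A) (f '' B) := by
  obtain ⟨hb1, hb12⟩ := hb
  subst hA hB
  obtain ⟨⟨x, hxA, hxB⟩, -, hBA⟩ := hlinked
  have hba : b₁ ≤ a := le_trans hxB.1 hxA.2
  have hab2 : a < b₂ := by
    obtain ⟨y, hyB, hyA⟩ := Set.not_subset.1 hBA
    simp only [Set.mem_Icc, not_and_or, not_le] at hyA
    rcases hyA with h | h
    · linarith [hyB.1]
    · linarith [hyB.2]
  have hS : (Set.Icc (-a) a ∩ Set.Ici 0 ∪ Set.Icc b₁ b₂) = Set.Icc 0 b₂ := by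
    ext t
    simp only [Set.mem_union, Set.mem_inter_iff, Set.mem_Icc, Set.mem_Ici]
    constructor
    · rintro (⟨⟨h1, h2⟩, h3⟩ | ⟨h1, h2⟩) <;> constructor <;> linarith
    · rintro ⟨h1, h2⟩
      by_cases h : t ≤ a
      · exact Or.inl ⟨⟨by linarith, h⟩, h1⟩
      · exact Or.inr ⟨by linarith, h2⟩
  rw [hS] at hcont hinj
  have hfA : f '' Set.Icc (-a) a = f '' Set.Icc 0 a := by
    apply Set.Subset.antisymm
    · rintro _ ⟨t, ht, rfl⟩
      rcases le_or_gt 0 t with h | h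
      · exact ⟨t, ⟨h, ht.2⟩, rfl⟩
      · exact ⟨-t, ⟨by linarith, by linarith [ht.1]⟩, heven t⟩
    · exact Set.image_mono (Set.Icc_subset_Icc (by linarith) le_rfl)
  rw [hfA]
  have h0b2 : (0 : ℝ) ≤ b₂ := by linarith
  have hsub1 : Set.Icc (0:ℝ) a ⊆ Set.Icc 0 b₂ := Set.Icc_subset_Icc le_rfl (le_of_lt hab2)
  have hsub2 : Set.Icc b₁ b₂ ⊆ Set.Icc (0:ℝ) b₂ := Set.Icc_subset_Icc (le_of_lt hb1) le_rfl
  have m0 : (0:ℝ) ∈ Set.Icc (0:ℝ) b₂ := Set.left_mem_Icc.2 h0b2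
  have ma : a ∈ Set.Icc (0:ℝ) b₂ := ⟨ha, le_of_lt hab2⟩
  have mb1 : b₁ ∈ Set.Icc (0:ℝ) b₂ := ⟨le_of_lt hb1, hb12⟩
  have mb2 : b₂ ∈ Set.Icc (0:ℝ) b₂ := Set.right_mem_Icc.2 h0b2
  rcases hcont.strictMonoOn_of_injOn_Icc' h0b2 hinj with hm | hm
  · have e1 : f '' Set.Icc 0 a = Set.Icc (f 0) (f a) :=
      img_mono f 0 a ha (hcont.mono hsub1) ((hm.monotoneOn).mono hsub1)
    have e2 : f '' Set.Icc b₁ b₂ = Set.Icc (f b₁) (f b₂) :=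
      img_mono f b₁ b₂ hb12 (hcont.mono hsub2) ((hm.monotoneOn).mono hsub2)
    rw [e1, e2]
    have h1 : f 0 < f b₁ := hm m0 mb1 hb1
    have h2 : f b₁ ≤ f a := hm.monotoneOn mb1 ma hba
    have h3 : f a < f b₂ := hm ma mb2 hab2
    refine ⟨⟨f b₁, ⟨le_of_lt h1, h2⟩, ⟨le_rfl, by linarith⟩⟩, ?_, ?_⟩
    · intro h
      have := (h ⟨le_rfl, by linarith⟩).1
      linarith
    · intro h
      have := (h ⟨by linarith, le_rfl⟩).2
      linarith
  · have e1 : f '' Set.Icc 0 a = Set.Icc (f a) (f 0) :=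
      img_anti f 0 a ha (hcont.mono hsub1) ((hm.antitoneOn).mono hsub1)
    have e2 : f '' Set.Icc b₁ b₂ = Set.Icc (f b₂) (f b₁) :=
      img_anti f b₁ b₂ hb12 (hcont.mono hsub2) ((hm.antitoneOn).mono hsub2)
    rw [e1, e2]
    have h1 : f b₁ < f 0 := hm m0 mb1 hb1
    have h2 : f a ≤ f b₁ := hm.antitoneOn mb1 ma hba
    have h3 : f b₂ < f a := hm ma mb2 hab2
    refine ⟨⟨f b₁, ⟨h2, le_of_lt h1⟩, ⟨by linarith, le_rfl⟩⟩, ?_, ?_⟩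
    · intro h
      have := (h ⟨by linarith, le_rfl⟩).2
      linarith
    · intro h
      have := (h ⟨le_rfl, by linarith⟩).1
      linarith
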